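/- For any graph G of order n ≥ 5, ⌊λ(G)/(n−2)⌋ ≤ μ_{n−2}(G) ≤ ⌈λ(G)/(n−2)⌉, where λ(G) is the edge-connectivity of G. -/

import Mathlib

open SimpleGraph

/-- A pendant `S`-Steiner tree in `G`: a subgraph `T` of `G` that is a tree,
contains `S`, and in which every vertex of `S` has degree 1. -/
def IsPendantSTree {V : Type*} (G : SimpleGraph V) (S : Set V) (T : G.Subgraph) : Prop :=
  S ⊆ T.verts ∧ T.coe.IsTree ∧ ∀ v ∈ S, (T.neighborSet v).ncard = 1

/-- A family of pairwise internally disjoint pendant `S`-Steiner trees. -/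
def IsIntDisjointFamily {V : Type*} (G : SimpleGraph V) (S : Set V)
    (F : Finset G.Subgraph) : Prop :=
  (∀ T ∈ F, IsPendantSTree G S T) ∧
  ∀ T ∈ F, ∀ T' ∈ F, T ≠ T' →
    T.edgeSet ∩ T'.edgeSet = ∅ ∧ T.verts ∩ T'.verts = S

/-- A family of pairwise edge-disjoint pendant `S`-Steiner trees. -/
def IsEdgeDisjointFamily {V : Type*} (G : SimpleGraph V) (S : Set V)
    (F : Finset G.Subgraph) : Prop :=
  (∀ T ∈ F, IsPendantSTree G S T) ∧
  ∀ T ∈ F, ∀ T' ∈ F, T ≠ T' → T.edgeSet ∩ T'.edgeSet = ∅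

/-- `τ(S)`: the maximum number of pairwise internally disjoint pendant `S`-Steiner trees. -/
noncomputable def tauLocal {V : Type*} (G : SimpleGraph V) (S : Set V) : ℕ :=
  sSup {n | ∃ F : Finset G.Subgraph, F.card = n ∧ IsIntDisjointFamily G S F}

/-- Pendant-tree `k`-connectivity `τ_k(G)`. -/
noncomputable def tau {V : Type*} (G : SimpleGraph V) (k : ℕ) : ℕ :=
  sInf {n | ∃ S : Finset V, S.card = k ∧ tauLocal G ↑S = n}

/-- `μ(S)`: the maximum number of pairwise edge-disjoint pendant `S`-Steiner trees. -/
noncomputable def muLocal {V : Type*} (G : SimpleGraph V) (S : Set V) : ℕ :=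
  sSup {n | ∃ F : Finset G.Subgraph, F.card = n ∧ IsEdgeDisjointFamily G S F}

/-- Pendant-tree `k`-edge-connectivity `μ_k(G)`. -/
noncomputable def mu {V : Type*} (G : SimpleGraph V) (k : ℕ) : ℕ :=
  sInf {n | ∃ S : Finset V, S.card = k ∧ muLocal G ↑S = n}

/-- Vertex connectivity (cut version): the least size of a vertex set whose removal
disconnects the graph or leaves at most one vertex. -/
noncomputable def kappa {V : Type*} [Fintype V] (G : SimpleGraph V) : ℕ :=
  sInf {n | ∃ S : Finset V, S.card = n ∧
    (¬ ((⊤ : G.Subgraph).deleteVerts ↑S).coe.Connected ∨ Fintype.card V - S.card ≤ 1)}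

/-- Edge connectivity: the least size of an edge set whose removal disconnects the graph. -/
noncomputable def edgeConn {V : Type*} (G : SimpleGraph V) : ℕ :=
  sInf {n | ∃ F : Finset (Sym2 V), F.card = n ∧ ↑F ⊆ G.edgeSet ∧
    ¬ (G.deleteEdges ↑F).Connected}

/-- Edges of `G` with one endpoint in `S` and the other outside `S`. -/
def crossEdges {V : Type*} (G : SimpleGraph V) (S : Set V) : Set (Sym2 V) :=
  {e | e ∈ G.edgeSet ∧ ∃ u v, e = s(u, v) ∧ u ∈ S ∧ v ∉ S}

section AuxCycle
variable {α : Type*} {H : SimpleGraph α}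
variable {α : Type*} {H : SimpleGraph α}

lemma cycle_start_two_neighbors {u : α} {c : H.Walk u u} (hc : c.IsCycle) :
    ∃ x y, x ≠ y ∧ H.Adj u x ∧ H.Adj u y := by
  have hl3 := hc.three_le_length
  cases c with
  | nil => exact absurd rfl hc.ne_nil
  | @cons _ x _ h p =>
    rw [Walk.cons_isCycle_iff] at hc
    have hlen : 2 ≤ p.length := by simp only [Walk.length_cons] at hl3; omega
    have hd : p.darts ≠ [] := by
      intro h0
      have := congrArg List.length h0
      rw [Walk.length_darts] at this
      simp only [List.length_nil] at this; omega
    set d := p.darts.getLast hd with hdd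
    have hsnd : d.snd = u := by rw [hdd, Walk.getLast_darts_eq_lastDart]; rfl
    refine ⟨x, d.fst, ?_, h, ?_⟩
    · intro hxy
      apply hc.2
      have hmem : d.edge ∈ p.edges := List.mem_map_of_mem (List.getLast_mem hd)
      have he : d.edge = s(u, x) := by
        show s(d.fst, d.snd) = s(u, x)
        rw [hsnd, ← hxy, Sym2.eq_swap]
      rwa [he] at hmem
    · have := d.adj
      rw [hsnd] at this
      exact this.symm

lemma isAcyclic_of_two_hubs (a b : α)
    (h : ∀ x, x ≠ a → x ≠ b → ∀ y z, H.Adj x y → H.Adj x z → y = z) : H.IsAcyclic := by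
  classical
  intro u c hc
  have key : ∀ w ∈ c.support, w = a ∨ w = b := by
    intro w hw
    by_contra hcon
    push_neg at hcon
    obtain ⟨x, y, hxy, hx, hy⟩ := cycle_start_two_neighbors (hc.rotate hw)
    exact hxy (h w hcon.1 hcon.2 x y hx hy)
  have hnd : c.support.tail.Nodup := hc.support_nodup
  have hlen : 3 ≤ c.support.tail.length := by
    have h1 := hc.three_le_length
    have h2 := c.length_support
    have : c.support.tail.length = c.support.length - 1 := by
      cases c.support <;> simp
    omega
  have hsub : c.support.tail.toFinset ⊆ {a, b} := by
    intro w hw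
    simp only [List.mem_toFinset] at hw
    rcases key w (List.mem_of_mem_tail hw) with h | h <;> simp [h]
  have h1 : c.support.tail.toFinset.card = c.support.tail.length :=
    List.toFinset_card_of_nodup hnd
  have h2 := Finset.card_le_card hsub
  have h3 : ({a, b} : Finset α).card ≤ 2 :=
    (Finset.card_insert_le _ _).trans (by simp)
  omega

lemma no_walk {v w z : α}
    (hv : ∀ y, H.Adj v y → y = w) (hw : ∀ y, H.Adj w y → y = v)
    (hzv : z ≠ v) (hzw : z ≠ w) (p : H.Walk v z) : False := by
  suffices h : ∀ n (p : H.Walk v z), p.length ≤ n → False from h p.length p le_rfl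
  intro n
  induction n with
  | zero =>
    intro p hp
    cases p with
    | nil => exact hzv rfl
    | cons h q => simp at hp
  | succ n ih =>
    intro p hp
    cases p with
    | nil => exact hzv rfl
    | @cons _ x _ h q =>
      have hx : x = w := hv _ h
      subst hx
      cases q with
      | nil => exact hzw rfl
      | @cons _ x' _ h' r =>
        have hx' : x' = v := hw _ h'
        subst hx'
        refine ih r ?_
        simp only [Walk.length_cons] at hp
        omega

end AuxCycle

section AuxMain
variable {V : Type*} {G : SimpleGraph V}

/-- Star subgraph with center `c` and leaves `S`. -/
def starSub (G : SimpleGraph V) (c : V) (S : Set V) : G.Subgraph where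
  verts := insert c S
  Adj x y := G.Adj x y ∧ ((x = c ∧ y ∈ S) ∨ (y = c ∧ x ∈ S))
  adj_sub h := h.1
  edge_vert := by
    rintro x y ⟨h, ⟨rfl, hy⟩ | ⟨rfl, hx⟩⟩
    · exact Set.mem_insert _ _
    · exact Set.mem_insert_of_mem _ hx
  symm := by
    refine ⟨?_⟩
    rintro x y ⟨h, h2⟩
    exact ⟨h.symm, by tauto⟩

lemma starSub_pendant {c : V} {S : Set V} (hc : c ∉ S) (hadj : ∀ s ∈ S, G.Adj c s) :
    IsPendantSTree G S (starSub G c S) := by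
  set T := starSub G c S with hT
  have hcv : c ∈ T.verts := Set.mem_insert _ _
  have hns : ∀ v ∈ S, T.neighborSet v = {c} := by
    intro v hv
    ext w
    simp only [Set.mem_singleton_iff, Subgraph.mem_neighborSet]
    constructor
    · rintro ⟨h, ⟨rfl, -⟩ | ⟨rfl, -⟩⟩
      · exact absurd hv hc
      · rfl
    · rintro rfl
      exact ⟨(hadj v hv).symm, Or.inr ⟨rfl, hv⟩⟩
  refine ⟨Set.subset_insert _ _, ⟨?_, ?_⟩, fun v hv => by rw [hns v hv]; simp⟩
  · -- connected
    have hreach : ∀ z : T.verts, T.coe.Reachable z ⟨c, hcv⟩ := by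
      rintro ⟨z, hz⟩
      rcases Set.mem_insert_iff.1 hz with rfl | hzS
      · exact Reachable.refl _
      · exact (Adj.reachable (by
          show T.Adj z c
          exact ⟨(hadj z hzS).symm, Or.inr ⟨rfl, hzS⟩⟩))
    have : Nonempty T.verts := ⟨⟨c, hcv⟩⟩
    exact Connected.mk (fun x y => (hreach x).trans (hreach y).symm)
  · -- acyclic
    apply isAcyclic_of_two_hubs (⟨c, hcv⟩ : T.verts) ⟨c, hcv⟩
    rintro ⟨x, hx⟩ hxc - ⟨y, hy⟩ ⟨z, hz⟩ hxy hxz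
    have hxc' : x ≠ c := fun h => hxc (Subtype.ext h)
    have h1 : y = c := by
      rcases hxy.2 with ⟨h, -⟩ | ⟨h, -⟩
      · exact absurd h hxc'
      · exact h
    have h2 : z = c := by
      rcases hxz.2 with ⟨h, -⟩ | ⟨h, -⟩
      · exact absurd h hxc'
      · exact h
    exact Subtype.ext (h1.trans h2.symm)

/-- Double star subgraph: hubs `a`,`b`, `s1` attached to `a`, the rest of `S` attached to `b`. -/
def dstarSub (G : SimpleGraph V) (a b s1 : V) (S : Set V) : G.Subgraph where
  verts := insert a (insert b S)
  Adj x y := G.Adj x y ∧ ((x = a ∧ y = b) ∨ (x = b ∧ y = a) ∨ (x = a ∧ y = s1 ∧ y ∈ S) ∨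
    (x = s1 ∧ x ∈ S ∧ y = a) ∨ (x = b ∧ y ∈ S ∧ y ≠ s1) ∨ (y = b ∧ x ∈ S ∧ x ≠ s1))
  adj_sub h := h.1
  edge_vert := by
    rintro x y ⟨h, ⟨rfl, -⟩ | ⟨rfl, -⟩ | ⟨rfl, -⟩ | ⟨rfl, hx, -⟩ | ⟨rfl, -⟩ | ⟨-, hx, -⟩
      ⟩
    · exact Set.mem_insert _ _
    · exact Set.mem_insert_of_mem _ (Set.mem_insert _ _)
    · exact Set.mem_insert _ _
    · exact Set.mem_insert_of_mem _ (Set.mem_insert_of_mem _ hx)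
    · exact Set.mem_insert_of_mem _ (Set.mem_insert _ _)
    · exact Set.mem_insert_of_mem _ (Set.mem_insert_of_mem _ hx)
  symm := by
    refine ⟨?_⟩
    rintro x y ⟨h, h2⟩
    exact ⟨h.symm, by tauto⟩

lemma dstarSub_pendant {a b s1 : V} {S : Set V} (ha : a ∉ S) (hb : b ∉ S) (hab : a ≠ b)
    (hs1 : s1 ∈ S) (Gab : G.Adj a b) (Gas1 : G.Adj a s1)
    (Gbs : ∀ s ∈ S, s ≠ s1 → G.Adj b s) :
    IsPendantSTree G S (dstarSub G a b s1 S) := by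
  set T := dstarSub G a b s1 S with hT
  have hav : a ∈ T.verts := Set.mem_insert _ _
  have hbv : b ∈ T.verts := Set.mem_insert_of_mem _ (Set.mem_insert _ _)
  have hSv : S ⊆ T.verts := fun s hs => Set.mem_insert_of_mem _ (Set.mem_insert_of_mem _ hs)
  have hns : ∀ v ∈ S, ∃ w, T.neighborSet v = {w} := by
    intro v hv
    by_cases hvs1 : v = s1
    · subst hvs1
      refine ⟨a, ?_⟩
      ext w
      simp only [Set.mem_singleton_iff, Subgraph.mem_neighborSet]
      constructor
      · rintro ⟨h, ⟨h1, -⟩ | ⟨h1, -⟩ | ⟨h1, -⟩ | ⟨-, -, h1⟩ | ⟨h1, -⟩ | ⟨-, -, h1⟩⟩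
        · exact absurd (h1 ▸ hv) ha
        · exact absurd (h1 ▸ hv) hb
        · exact absurd (h1 ▸ hv) ha
        · exact h1
        · exact absurd (h1 ▸ hv) hb
        · exact absurd rfl h1
      · rintro rfl
        exact ⟨Gas1.symm, Or.inr (Or.inr (Or.inr (Or.inl ⟨rfl, hv, rfl⟩)))⟩
    · refine ⟨b, ?_⟩
      ext w
      simp only [Set.mem_singleton_iff, Subgraph.mem_neighborSet]
      constructor
      · rintro ⟨h, ⟨h1, -⟩ | ⟨h1, -⟩ | ⟨h1, -⟩ | ⟨h1, -, -⟩ | ⟨h1, -⟩ | ⟨h1, -, -⟩⟩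
        · exact absurd (h1 ▸ hv) ha
        · exact absurd (h1 ▸ hv) hb
        · exact absurd (h1 ▸ hv) ha
        · exact absurd h1 hvs1
        · exact absurd (h1 ▸ hv) hb
        · exact h1
      · rintro rfl
        exact ⟨(Gbs v hv hvs1).symm, Or.inr (Or.inr (Or.inr (Or.inr (Or.inr ⟨rfl, hv, hvs1⟩))))⟩
  refine ⟨hSv, ⟨?_, ?_⟩, fun v hv => by obtain ⟨w, hw⟩ := hns v hv; rw [hw]; simp⟩
  · have hreach : ∀ z : T.verts, T.coe.Reachable z ⟨b, hbv⟩ := by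
      rintro ⟨z, hz⟩
      rcases Set.mem_insert_iff.1 hz with rfl | hz'
      · exact Adj.reachable (by show T.Adj z b; exact ⟨Gab, Or.inl ⟨rfl, rfl⟩⟩)
      rcases Set.mem_insert_iff.1 hz' with rfl | hzS
      · exact Reachable.refl _
      by_cases hzs1 : z = s1
      · subst hzs1
        refine (Adj.reachable (v := (⟨a, hav⟩ : T.verts)) ?_).trans (Adj.reachable ?_)
        · show T.Adj z a
          exact ⟨Gas1.symm, Or.inr (Or.inr (Or.inr (Or.inl ⟨rfl, hzS, rfl⟩)))⟩
        · show T.Adj a b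
          exact ⟨Gab, Or.inl ⟨rfl, rfl⟩⟩
      · exact Adj.reachable (by
          show T.Adj z b
          exact ⟨(Gbs z hzS hzs1).symm, Or.inr (Or.inr (Or.inr (Or.inr (Or.inr ⟨rfl, hzS, hzs1⟩))))⟩)
    have : Nonempty T.verts := ⟨⟨b, hbv⟩⟩
    exact Connected.mk (fun x y => (hreach x).trans (hreach y).symm)
  · apply isAcyclic_of_two_hubs (⟨a, hav⟩ : T.verts) ⟨b, hbv⟩
    rintro ⟨x, hx⟩ hxa hxb ⟨y, hy⟩ ⟨z, hz⟩ hxy hxz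
    have hxa' : x ≠ a := fun h => hxa (Subtype.ext h)
    have hxb' : x ≠ b := fun h => hxb (Subtype.ext h)
    have key : ∀ w, T.Adj x w → (x = s1 ∧ w = a) ∨ (x ≠ s1 ∧ w = b) := by
      rintro w ⟨h, ⟨h1, -⟩ | ⟨h1, -⟩ | ⟨h1, -⟩ | ⟨h1, -, h2⟩ | ⟨h1, -⟩ | ⟨h2, -, h3⟩⟩
      · exact absurd h1 hxa'
      · exact absurd h1 hxb'
      · exact absurd h1 hxa'
      · exact Or.inl ⟨h1, h2⟩
      · exact absurd h1 hxb'
      · exact Or.inr ⟨h3, h2⟩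
    rcases key y hxy with ⟨hy1, h1⟩ | ⟨hy1, h1⟩ <;> rcases key z hxz with ⟨hz1, h2⟩ | ⟨hz1, h2⟩
    · exact Subtype.ext (h1.trans h2.symm)
    · exact absurd hy1 hz1
    · exact absurd hz1 hy1
    · exact Subtype.ext (h1.trans h2.symm)



lemma pendant_hub {S : Set V} {T : G.Subgraph} (hT : IsPendantSTree G S T)
    (hS : 3 ≤ S.ncard) {v : V} (hv : v ∈ S) :
    ∃ w, w ∉ S ∧ T.Adj v w ∧ ∀ y, T.Adj v y → y = w := by
  obtain ⟨hsub, htree, hdeg⟩ := hT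
  obtain ⟨w, hw⟩ := Set.ncard_eq_one.1 (hdeg v hv)
  have huniq : ∀ y, T.Adj v y → y = w := by
    intro y hy
    have : y ∈ T.neighborSet v := hy
    rwa [hw, Set.mem_singleton_iff] at this
  have hadj : T.Adj v w := by
    have : w ∈ T.neighborSet v := by rw [hw]; exact rfl
    exact this
  refine ⟨w, ?_, hadj, huniq⟩
  intro hwS
  have huniq' : ∀ y, T.Adj w y → y = v := by
    obtain ⟨w', hw'⟩ := Set.ncard_eq_one.1 (hdeg w hwS)
    have hvw' : v ∈ T.neighborSet w := hadj.symm
    rw [hw', Set.mem_singleton_iff] at hvw'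
    intro y hy
    have : y ∈ T.neighborSet w := hy
    rw [hw', Set.mem_singleton_iff] at this
    rw [this, hvw']
  have hz : ∃ z ∈ S, z ≠ v ∧ z ≠ w := by
    by_contra hcon
    push_neg at hcon
    have hsub2 : S ⊆ {v, w} := by
      intro z hzS
      rcases eq_or_ne z v with h | h
      · exact Or.inl h
      · exact Or.inr (hcon z hzS h)
    have h1 := Set.ncard_le_ncard hsub2 (Set.toFinite _)
    have h2 : ({v, w} : Set V).ncard ≤ 2 :=
      (Set.ncard_insert_le _ _).trans (by simp)
    omega
  obtain ⟨z, hzS, hzv, hzw⟩ := hz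
  have hwv : w ∈ T.verts := T.edge_vert hadj.symm
  obtain ⟨p⟩ := htree.isConnected.preconnected ⟨v, hsub hv⟩ ⟨z, hsub hzS⟩
  refine no_walk (H := T.coe) (w := (⟨w, hwv⟩ : T.verts)) ?_ ?_ ?_ ?_ p
  · rintro ⟨y, hy⟩ hadj'
    exact Subtype.ext (huniq y hadj')
  · rintro ⟨y, hy⟩ hadj'
    exact Subtype.ext (huniq' y hadj')
  · exact fun h => hzv (congrArg Subtype.val h)
  · exact fun h => hzw (congrArg Subtype.val h)

lemma family_choice {S : Set V} {F : Finset G.Subgraph} (hF : IsEdgeDisjointFamily G S F)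
    (hS : 3 ≤ S.ncard) {v : V} (hv : v ∈ S) :
    ∃ g : G.Subgraph → V, ∀ T ∈ F, g T ∉ S ∧ T.Adj v (g T) := by
  classical
  have : ∀ T : G.Subgraph, ∃ w, T ∈ F → (w ∉ S ∧ T.Adj v w) := by
    intro T
    by_cases hTF : T ∈ F
    · obtain ⟨w, h1, h2, -⟩ := pendant_hub (hF.1 T hTF) hS hv
      exact ⟨w, fun _ => ⟨h1, h2⟩⟩
    · exact ⟨v, fun h => absurd h hTF⟩
  obtain ⟨g, hg⟩ := Classical.axiomOfChoice this
  exact ⟨g, fun T hT => hg T hT⟩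

lemma family_card_le_two {S : Set V} {F : Finset G.Subgraph} (hF : IsEdgeDisjointFamily G S F)
    (hS : 3 ≤ S.ncard) {v a b : V} (hv : v ∈ S)
    (hcompl : ∀ x, x ∉ S → x = a ∨ x = b) : F.card ≤ 2 := by
  classical
  obtain ⟨g, hg⟩ := family_choice hF hS hv
  have hcard : ({s(v, a), s(v, b)} : Finset (Sym2 V)).card ≤ 2 :=
    (Finset.card_insert_le _ _).trans (by simp)
  refine le_trans (Finset.card_le_card_of_injOn (fun T => s(v, g T)) ?_ ?_) hcard
  · intro T hT
    rcases hcompl _ (hg T hT).1 with h | h <;> simp [h]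
  · intro T hT T' hT' heq
    by_contra hne
    have hdisj := hF.2 T hT T' hT' hne
    have h1 : s(v, g T) ∈ T.edgeSet := Subgraph.mem_edgeSet.2 (hg T hT).2
    have h2 : s(v, g T) ∈ T'.edgeSet := by
      have heq' : s(v, g T) = s(v, g T') := heq
      rw [heq']; exact Subgraph.mem_edgeSet.2 (hg T' hT').2
    exact absurd hdisj (by
      rw [Set.eq_empty_iff_forall_notMem]
      push_neg
      exact ⟨_, h1, h2⟩)

lemma family_card_le_one {S : Set V} {F : Finset G.Subgraph} (hF : IsEdgeDisjointFamily G S F)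
    (hS : 3 ≤ S.ncard) {v a b : V} (hv : v ∈ S)
    (hcompl : ∀ x, x ∉ S → x = a ∨ x = b) (hva : ¬ G.Adj v a) : F.card ≤ 1 := by
  classical
  obtain ⟨g, hg⟩ := family_choice hF hS hv
  have hgb : ∀ T ∈ F, g T = b := by
    intro T hT
    rcases hcompl _ (hg T hT).1 with h | h
    · exact absurd (h ▸ T.adj_sub (hg T hT).2) hva
    · exact h
  refine Finset.card_le_one.2 (fun T hT T' hT' => ?_)
  by_contra hne
  have hdisj := hF.2 T hT T' hT' hne
  have h1 : s(v, b) ∈ T.edgeSet := Subgraph.mem_edgeSet.2 (hgb T hT ▸ (hg T hT).2)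
  have h2 : s(v, b) ∈ T'.edgeSet := Subgraph.mem_edgeSet.2 (hgb T' hT' ▸ (hg T' hT').2)
  exact absurd hdisj (by
    rw [Set.eq_empty_iff_forall_notMem]
    push_neg
    exact ⟨_, h1, h2⟩)

lemma empty_family (S : Set V) : IsEdgeDisjointFamily G S (∅ : Finset G.Subgraph) :=
  ⟨fun T h => absurd h (Finset.notMem_empty T), fun T h => absurd h (Finset.notMem_empty T)⟩

lemma muLocal_le {S : Set V} (m : ℕ)
    (h : ∀ F : Finset G.Subgraph, IsEdgeDisjointFamily G S F → F.card ≤ m) :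
    muLocal G S ≤ m := by
  refine csSup_le ⟨0, ∅, rfl, empty_family S⟩ ?_
  rintro n ⟨F, rfl, hF⟩
  exact h F hF

lemma one_le_muLocal {S : Set V} {T : G.Subgraph} (hT : IsPendantSTree G S T)
    (hbdd : BddAbove {n | ∃ F : Finset G.Subgraph, F.card = n ∧ IsEdgeDisjointFamily G S F}) :
    1 ≤ muLocal G S := by
  refine le_csSup hbdd ⟨{T}, Finset.card_singleton T, ?_, ?_⟩
  · intro T' hT'
    rw [Finset.mem_singleton] at hT'
    exact hT' ▸ hT
  · intro T1 h1 T2 h2 hne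
    rw [Finset.mem_singleton] at h1 h2
    exact absurd (h1.trans h2.symm) hne


lemma starSub_pendant' {c : V} {S : Set V} (hc : c ∉ S) (hadj : ∀ s ∈ S, G.Adj c s) :
    ∃ T, IsPendantSTree G S T := ⟨_, starSub_pendant hc hadj⟩

lemma dstarSub_pendant' {a b s1 : V} {S : Set V} (ha : a ∉ S) (hb : b ∉ S) (hab : a ≠ b)
    (hs1 : s1 ∈ S) (Gab : G.Adj a b) (Gas1 : G.Adj a s1)
    (Gbs : ∀ s ∈ S, s ≠ s1 → G.Adj b s) : ∃ T, IsPendantSTree G S T :=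
  ⟨_, dstarSub_pendant ha hb hab hs1 Gab Gas1 Gbs⟩




lemma no_pendant_of_unreachable {S : Set V} {x y : V} (hx : x ∈ S) (hy : y ∈ S)
    (hnr : ¬G.Reachable x y) {T : G.Subgraph} (hT : IsPendantSTree G S T) : False := by
  obtain ⟨hsub, htree, -⟩ := hT
  obtain ⟨p⟩ := htree.isConnected.preconnected ⟨x, hsub hx⟩ ⟨y, hsub hy⟩
  exact hnr (Reachable.map T.hom ⟨p⟩)

variable [Fintype V]

lemma extract3 [DecidableEq V] (D : Finset V) (hD : 3 ≤ D.card) :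
    ∃ a b c, a ∈ D ∧ b ∈ D ∧ c ∈ D ∧ a ≠ b ∧ c ≠ a ∧ c ≠ b := by
  have h1 : 0 < D.card := by omega
  obtain ⟨a, ha⟩ := Finset.card_pos.1 h1
  have h2 : 0 < (D.erase a).card := by rw [Finset.card_erase_of_mem ha]; omega
  obtain ⟨b, hb⟩ := Finset.card_pos.1 h2
  have h3 : 0 < ((D.erase a).erase b).card := by
    rw [Finset.card_erase_of_mem hb, Finset.card_erase_of_mem ha]; omega
  obtain ⟨c, hc⟩ := Finset.card_pos.1 h3
  have hbD := Finset.mem_of_mem_erase hb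
  have hcD := Finset.mem_of_mem_erase (Finset.mem_of_mem_erase hc)
  refine ⟨a, b, c, ha, hbD, hcD, ?_, ?_, ?_⟩
  · exact fun h => (Finset.ne_of_mem_erase hb) h.symm
  · exact Finset.ne_of_mem_erase (Finset.mem_of_mem_erase hc)
  · exact Finset.ne_of_mem_erase hc

lemma exists_nonreachable (hn : 5 ≤ Fintype.card V) (hdis : ¬G.Connected) :
    ∃ a b x y : V, a ≠ b ∧ x ≠ a ∧ x ≠ b ∧ y ≠ a ∧ y ≠ b ∧ ¬G.Reachable x y := by
  classical
  have hne : Nonempty V := Fintype.card_pos_iff.1 (by omega)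
  have hpre : ¬ G.Preconnected := fun h => hdis ((connected_iff G).2 ⟨h, hne⟩)
  obtain ⟨u, hu⟩ := not_forall.1 hpre
  obtain ⟨v, hnr⟩ := not_forall.1 hu
  set C : Finset V := Finset.univ.filter (fun x => G.Reachable u x) with hC
  have huC : u ∈ C := Finset.mem_filter.2 ⟨Finset.mem_univ _, Reachable.refl _⟩
  have hvC : v ∉ C := fun h => hnr (Finset.mem_filter.1 h).2
  by_cases h3 : 3 ≤ C.card
  · obtain ⟨a, b, w, haC, hbC, hwC, hab, hwa, hwb⟩ := extract3 C h3
    refine ⟨a, b, w, v, hab, hwa, hwb, ?_, ?_, ?_⟩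
    · exact fun h => hvC (h ▸ haC)
    · exact fun h => hvC (h ▸ hbC)
    · intro h
      exact hnr (((Finset.mem_filter.1 hwC).2).trans h)
  · have h3' : 3 ≤ Cᶜ.card := by
      rw [Finset.card_compl]
      omega
    obtain ⟨a, b, w, haC, hbC, hwC, hab, hwa, hwb⟩ := extract3 Cᶜ h3'
    refine ⟨a, b, u, w, hab, ?_, ?_, hwa, hwb, ?_⟩
    · exact fun h => (Finset.mem_compl.1 haC) (h ▸ huC)
    · exact fun h => (Finset.mem_compl.1 hbC) (h ▸ huC)
    · intro h
      exact (Finset.mem_compl.1 hwC) (Finset.mem_filter.2 ⟨Finset.mem_univ _, h⟩)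





variable [Fintype V]

lemma two_nonadj_false [DecidableEq V] [DecidableRel G.Adj]
    (hdeg : ∀ x : V, Fintype.card V - 2 ≤ G.degree x) (hn : 5 ≤ Fintype.card V)
    {x z1 z2 : V} (h1 : ¬G.Adj x z1) (h2 : ¬G.Adj x z2) (hz : z1 ≠ z2)
    (h1x : z1 ≠ x) (h2x : z2 ≠ x) : False := by
  have hsub : G.neighborFinset x ⊆ Finset.univ \ {x, z1, z2} := by
    intro w hw
    rw [mem_neighborFinset] at hw
    simp only [Finset.mem_sdiff, Finset.mem_univ, true_and, Finset.mem_insert,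
      Finset.mem_singleton, not_or]
    exact ⟨fun h => G.ne_of_adj hw (h ▸ rfl), fun h => h1 (h ▸ hw), fun h => h2 (h ▸ hw)⟩
  have hc3 : ({x, z1, z2} : Finset V).card = 3 := by
    rw [Finset.card_insert_of_notMem (by simp [h1x.symm, h2x.symm]),
      Finset.card_insert_of_notMem (by simp [hz]), Finset.card_singleton]
  have := Finset.card_le_card hsub
  rw [Finset.card_sdiff_of_subset (Finset.subset_univ _), Finset.card_univ, hc3] at this
  have hd := hdeg x
  rw [← card_neighborFinset_eq_degree] at hd
  omega

lemma exists_pendant_of_degree [DecidableEq V] [DecidableRel G.Adj]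
    (hn : 5 ≤ Fintype.card V) (hdeg : ∀ x : V, Fintype.card V - 2 ≤ G.degree x)
    {S : Finset V} {a b : V} (hab : a ≠ b) (ha : a ∉ S) (hb : b ∉ S) :
    ∃ T, IsPendantSTree G ↑S T := by
  by_cases hA : ∀ s ∈ S, G.Adj a s
  · exact starSub_pendant' (by simpa using ha) (fun s hs => hA s hs)
  push_neg at hA
  obtain ⟨s0, hs0S, hna⟩ := hA
  by_cases hB : ∀ s ∈ S, G.Adj b s
  · exact starSub_pendant' (by simpa using hb) (fun s hs => hB s hs)
  push_neg at hB
  obtain ⟨s1, hs1S, hnb⟩ := hB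
  have hs0a : s0 ≠ a := fun h => ha (h ▸ hs0S)
  have hs0b : s0 ≠ b := fun h => hb (h ▸ hs0S)
  have hs1a : s1 ≠ a := fun h => ha (h ▸ hs1S)
  have hs1b : s1 ≠ b := fun h => hb (h ▸ hs1S)
  have hs01 : s0 ≠ s1 := by
    rintro rfl
    exact two_nonadj_false hdeg hn (fun h => hna h.symm) (fun h => hnb h.symm)
      hab hs0a.symm hs0b.symm
  have hab2 : G.Adj a b := by
    by_contra hnab
    exact two_nonadj_false hdeg hn hna hnab hs0b hs0a hab.symm
  have has1 : G.Adj a s1 := by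
    by_contra h
    exact two_nonadj_false hdeg hn hna h hs01 hs0a hs1a
  have hbs : ∀ s ∈ (↑S : Set V), s ≠ s1 → G.Adj b s := by
    intro s hs hss1
    by_contra h
    exact two_nonadj_false hdeg hn hnb h (fun h' => hss1 h'.symm) hs1b
      (fun h' => hb (h' ▸ hs))
  exact dstarSub_pendant' (by simpa using ha) (by simpa using hb) hab
    (by simpa using hs1S) hab2 has1 hbs

end AuxMain

section AuxEC
variable {V : Type*} [Fintype V] [DecidableEq V] (G : SimpleGraph V) [DecidableRel G.Adj]

lemma degree_cut_mem (v : V) (hV : 2 ≤ Fintype.card V) :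
    ∃ F : Finset (Sym2 V), (↑F ⊆ G.edgeSet ∧ ¬ (G.deleteEdges ↑F).Connected) ∧
      F.card ≤ Fintype.card V - 1 := by
  classical
  refine ⟨(G.incidenceSet v).toFinset, ⟨?_, ?_⟩, ?_⟩
  · rw [Set.coe_toFinset]
    exact G.incidenceSet_subset v
  · rw [Set.coe_toFinset]
    intro hconn
    obtain ⟨w, hw⟩ := Fintype.exists_ne_of_one_lt_card (by omega) v
    obtain ⟨p⟩ := hconn.preconnected v w
    cases p with
    | nil => exact hw rfl
    | @cons _ x _ h q =>
      rw [deleteEdges_adj] at h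
      exact h.2 ⟨G.mem_edgeSet.2 h.1, Sym2.mem_mk_left _ _⟩
  · rw [Set.toFinset_card]
    rw [G.card_incidenceSet_eq_degree v]
    have := G.degree_lt_card_verts v
    omega

lemma edgeConn_le_degree (v : V) (hV : 2 ≤ Fintype.card V) :
    edgeConn G ≤ G.degree v := by
  classical
  have h1 : Fintype.card (G.incidenceSet v) = G.degree v := G.card_incidenceSet_eq_degree v
  refine Nat.sInf_le ⟨(G.incidenceSet v).toFinset, by rw [Set.toFinset_card, h1], ?_, ?_⟩
  · rw [Set.coe_toFinset]
    exact G.incidenceSet_subset v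
  · rw [Set.coe_toFinset]
    intro hconn
    obtain ⟨w, hw⟩ := Fintype.exists_ne_of_one_lt_card (by omega) v
    obtain ⟨p⟩ := hconn.preconnected v w
    cases p with
    | nil => exact hw rfl
    | @cons _ x _ h q =>
      rw [deleteEdges_adj] at h
      exact h.2 ⟨G.mem_edgeSet.2 h.1, Sym2.mem_mk_left _ _⟩

lemma edgeConn_set_nonempty (hV : 2 ≤ Fintype.card V) :
    {n | ∃ F : Finset (Sym2 V), F.card = n ∧ ↑F ⊆ G.edgeSet ∧
      ¬ (G.deleteEdges ↑F).Connected}.Nonempty := by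
  classical
  have : Nonempty V := Fintype.card_pos_iff.1 (by omega)
  obtain ⟨v⟩ := this
  obtain ⟨F, ⟨h1, h2⟩, -⟩ := degree_cut_mem G v hV
  exact ⟨F.card, F, rfl, h1, h2⟩

lemma one_le_edgeConn (hV : 2 ≤ Fintype.card V) (hconn : G.Connected) :
    1 ≤ edgeConn G := by
  by_contra h
  push_neg at h
  interval_cases h' : edgeConn G
  rcases Nat.sInf_eq_zero.1 h' with h0 | h0
  · obtain ⟨F, hc, -, hnc⟩ := h0
    rw [Finset.card_eq_zero] at hc
    subst hc
    simp only [Finset.coe_empty, deleteEdges_empty] at hnc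
    exact hnc hconn
  · exact absurd h0 (Set.nonempty_iff_ne_empty.1 (edgeConn_set_nonempty G hV))

lemma complete_edgeConn (hV : 3 ≤ Fintype.card V)
    (hcomp : ∀ u v : V, u ≠ v → G.Adj u v) :
    Fintype.card V - 1 ≤ edgeConn G := by
  classical
  refine le_csInf (edgeConn_set_nonempty G (by omega)) ?_
  rintro m ⟨F, rfl, hFsub, hFdis⟩
  by_contra hlt
  push_neg at hlt
  have hFc : F.card ≤ Fintype.card V - 2 := by omega
  apply hFdis
  have hne : Nonempty V := Fintype.card_pos_iff.1 (by omega)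
  refine Connected.mk ?_
  intro u v
  rcases eq_or_ne u v with rfl | huv
  · exact Reachable.refl _
  by_cases hdir : s(u, v) ∈ F
  · have key : ∃ w, w ≠ u ∧ w ≠ v ∧ s(u, w) ∉ F ∧ s(w, v) ∉ F := by
      by_contra hcon
      push_neg at hcon
      set W : Finset V := Finset.univ \ {u, v} with hW
      have hWcard : W.card = Fintype.card V - 2 := by
        rw [hW, Finset.card_sdiff_of_subset (Finset.subset_univ _), Finset.card_univ,
          Finset.card_insert_of_notMem (by simpa using huv), Finset.card_singleton]
      set g : V → Sym2 V := fun w => if s(u, w) ∈ F then s(u, w) else s(w, v) with hg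
      have hg1 : ∀ w ∈ W, g w ∈ F := by
        intro w hw
        simp only [hW, Finset.mem_sdiff, Finset.mem_univ, Finset.mem_insert,
          Finset.mem_singleton, true_and, not_or] at hw
        rw [hg]
        dsimp only
        split_ifs with h
        · exact h
        · exact hcon w hw.1 hw.2 h
      have hginj : Set.InjOn g ↑W := by
        intro w hw w' hw' heq
        simp only [hW, Finset.coe_sdiff, Finset.coe_univ, Set.mem_diff,
          Finset.coe_insert, Finset.coe_singleton, Set.mem_insert_iff,
          Set.mem_singleton_iff, not_or, Set.mem_univ, true_and] at hw hw'
        rw [hg] at heq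
        dsimp only at heq
        split_ifs at heq with h1 h2 h2 <;> rw [Sym2.eq_iff] at heq <;>
          rcases heq with ⟨ha, hb⟩ | ⟨ha, hb⟩ <;> simp_all
      have himg : (W.image g).card = Fintype.card V - 2 := by
        rw [Finset.card_image_of_injOn hginj, hWcard]
      have hnotmem : s(u, v) ∉ W.image g := by
        rw [Finset.mem_image]
        rintro ⟨w, hw, hgw⟩
        simp only [hW, Finset.mem_sdiff, Finset.mem_univ, Finset.mem_insert,
          Finset.mem_singleton, true_and, not_or] at hw
        rw [hg] at hgw
        dsimp only at hgw
        split_ifs at hgw <;> rw [Sym2.eq_iff] at hgw <;>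
          rcases hgw with ⟨ha, hb⟩ | ⟨ha, hb⟩ <;> simp_all
      have hins : insert s(u, v) (W.image g) ⊆ F := by
        intro e he
        rcases Finset.mem_insert.1 he with rfl | he'
        · exact hdir
        · obtain ⟨w, hw, rfl⟩ := Finset.mem_image.1 he'
          exact hg1 w hw
      have := Finset.card_le_card hins
      rw [Finset.card_insert_of_notMem hnotmem, himg] at this
      omega
    obtain ⟨w, hwu, hwv, h1, h2⟩ := key
    have r1 : (G.deleteEdges ↑F).Adj u w := by
      rw [deleteEdges_adj]
      exact ⟨hcomp u w (Ne.symm hwu), h1⟩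
    have r2 : (G.deleteEdges ↑F).Adj w v := by
      rw [deleteEdges_adj]
      exact ⟨hcomp w v hwv, h2⟩
    exact r1.reachable.trans r2.reachable
  · exact Adj.reachable (by rw [deleteEdges_adj]; exact ⟨hcomp u v huv, hdir⟩)

end AuxEC

/-- ⌊λ(G)/(n-2)⌋ ≤ μ_{n-2}(G) ≤ ⌈λ(G)/(n-2)⌉ for n ≥ 5. -/
theorem mu_card_sub_two_bounds {V : Type*} [Fintype V] (G : SimpleGraph V)
    (hn : 5 ≤ Fintype.card V) :
    edgeConn G / (Fintype.card V - 2) ≤ mu G (Fintype.card V - 2) ∧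
    mu G (Fintype.card V - 2) ≤
      (edgeConn G + (Fintype.card V - 2) - 1) / (Fintype.card V - 2) := by
  classical
  set n := Fintype.card V with hn'
  have hk3 : 3 ≤ n - 2 := by omega
  have hSex : ∃ S : Finset V, S.card = n - 2 := by
    obtain ⟨t, -, ht⟩ := Finset.exists_subset_card_eq
      (s := (Finset.univ : Finset V)) (n := n - 2) (by rw [Finset.card_univ]; omega)
    exact ⟨t, ht⟩
  have hcomplS : ∀ S : Finset V, S.card = n - 2 →
      ∃ a b : V, a ≠ b ∧ a ∉ S ∧ b ∉ S ∧ ∀ x, x ∉ S → x = a ∨ x = b := by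
    intro S hS
    have h2 : Sᶜ.card = 2 := by rw [Finset.card_compl, hS]; omega
    obtain ⟨a, b, hab, hC⟩ := Finset.card_eq_two.1 h2
    have hmem : ∀ x, x ∉ S ↔ (x = a ∨ x = b) := by
      intro x
      rw [← Finset.mem_compl, hC, Finset.mem_insert, Finset.mem_singleton]
    exact ⟨a, b, hab, fun h => ((hmem a).2 (Or.inl rfl)) h,
      fun h => ((hmem b).2 (Or.inr rfl)) h, fun x hx => (hmem x).1 hx⟩
  have hmemS : ∀ S : Finset V, S.card = n - 2 → ∃ v, v ∈ S := by
    intro S hS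
    have : 0 < S.card := by omega
    obtain ⟨v, hv⟩ := Finset.card_pos.1 this
    exact ⟨v, hv⟩
  constructor
  · -- lower bound
    by_cases hL : edgeConn G < n - 2
    · rw [Nat.div_eq_of_lt hL]
      exact Nat.zero_le _
    · push_neg at hL
      letI : DecidableRel G.Adj := Classical.decRel _
      have hub : edgeConn G ≤ n - 1 := by
        obtain ⟨v⟩ : Nonempty V := Fintype.card_pos_iff.1 (by omega)
        have h1 := edgeConn_le_degree G v (by omega)
        have h2 := G.degree_lt_card_verts v
        omega
      have hdivle : edgeConn G / (n - 2) ≤ 1 := by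
        have : edgeConn G / (n - 2) < 2 := by
          rw [Nat.div_lt_iff_lt_mul (by omega)]
          omega
        omega
      have hmu : 1 ≤ mu G (n - 2) := by
        refine le_csInf ?_ ?_
        · obtain ⟨S, hS⟩ := hSex
          exact ⟨muLocal G ↑S, S, hS, rfl⟩
        · rintro m ⟨S, hS, rfl⟩
          obtain ⟨a, b, hab, ha, hb, hcompl⟩ := hcomplS S hS
          have hdeg : ∀ x : V, n - 2 ≤ G.degree x := fun x =>
            le_trans hL (edgeConn_le_degree G x (by omega))
          obtain ⟨T, hT⟩ := exists_pendant_of_degree (G := G) (by omega) hdeg hab ha hb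
          obtain ⟨v, hv⟩ := hmemS S hS
          have hnc : 3 ≤ (↑S : Set V).ncard := by rw [Set.ncard_coe_finset]; omega
          refine one_le_muLocal hT ⟨2, ?_⟩
          rintro m ⟨F, rfl, hF⟩
          exact family_card_le_two hF hnc (Finset.mem_coe.2 hv)
            (fun x hx => hcompl x (fun h => hx (Finset.mem_coe.2 h)))
      omega
  · -- upper bound
    by_cases hconn : G.Connected
    · by_cases hcomp : ∀ u v : V, u ≠ v → G.Adj u v
      · letI : DecidableRel G.Adj := Classical.decRel _
        have hL := complete_edgeConn G (by omega) hcomp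
        have h2 : 2 ≤ (edgeConn G + (n - 2) - 1) / (n - 2) := by
          rw [Nat.le_div_iff_mul_le (by omega)]
          omega
        obtain ⟨S, hS⟩ := hSex
        obtain ⟨a, b, hab, ha, hb, hcompl⟩ := hcomplS S hS
        obtain ⟨v, hv⟩ := hmemS S hS
        have h1 : mu G (n - 2) ≤ muLocal G ↑S := Nat.sInf_le ⟨S, hS, rfl⟩
        have hnc : 3 ≤ (↑S : Set V).ncard := by rw [Set.ncard_coe_finset]; omega
        have h3 : muLocal G ↑S ≤ 2 := muLocal_le 2 (fun F hF =>
          family_card_le_two hF hnc (Finset.mem_coe.2 hv)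
            (fun x hx => hcompl x (fun h => hx (Finset.mem_coe.2 h))))
        omega
      · push_neg at hcomp
        obtain ⟨u, x, hux, hnadj⟩ := hcomp
        have hb' : ∃ b', b' ≠ u ∧ b' ≠ x := by
          have hne : (Finset.univ \ {u, x} : Finset V).Nonempty := by
            rw [← Finset.card_pos, Finset.card_sdiff_of_subset (Finset.subset_univ _),
              Finset.card_univ]
            have : ({u, x} : Finset V).card ≤ 2 :=
              (Finset.card_insert_le _ _).trans (by simp)
            omega
          obtain ⟨b', hb'⟩ := hne
          simp only [Finset.mem_sdiff, Finset.mem_univ, Finset.mem_insert,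
            Finset.mem_singleton, true_and, not_or] at hb'
          exact ⟨b', hb'.1, hb'.2⟩
        obtain ⟨b', hb'u, hb'x⟩ := hb'
        set S : Finset V := ({u, b'} : Finset V)ᶜ with hSdef
        have hScard : S.card = n - 2 := by
          rw [hSdef, Finset.card_compl,
            Finset.card_insert_of_notMem (by simpa using (Ne.symm hb'u)),
            Finset.card_singleton]
        have hxS : x ∈ S := by
          rw [hSdef, Finset.mem_compl, Finset.mem_insert, Finset.mem_singleton]
          push_neg
          exact ⟨Ne.symm hux, Ne.symm hb'x⟩
        have hL1 : 1 ≤ edgeConn G := one_le_edgeConn G (by omega) hconn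
        have hc1 : 1 ≤ (edgeConn G + (n - 2) - 1) / (n - 2) := by
          rw [Nat.le_div_iff_mul_le (by omega)]
          omega
        have h1 : mu G (n - 2) ≤ muLocal G ↑S := Nat.sInf_le ⟨S, hScard, rfl⟩
        have hnc : 3 ≤ (↑S : Set V).ncard := by rw [Set.ncard_coe_finset]; omega
        have hcompl : ∀ y, y ∉ (↑S : Set V) → y = u ∨ y = b' := by
          intro y hy
          have : y ∉ S := fun h => hy (Finset.mem_coe.2 h)
          rw [hSdef, Finset.mem_compl, not_not, Finset.mem_insert,
            Finset.mem_singleton] at this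
          exact this
        have h3 : muLocal G ↑S ≤ 1 := muLocal_le 1 (fun F hF =>
          family_card_le_one hF hnc (Finset.mem_coe.2 hxS) hcompl
            (fun h => hnadj h.symm))
        omega
    · obtain ⟨a, b, x, y, hab, hxa, hxb, hya, hyb, hnr⟩ :=
        exists_nonreachable (by omega) hconn
      set S : Finset V := ({a, b} : Finset V)ᶜ with hSdef
      have hScard : S.card = n - 2 := by
        rw [hSdef, Finset.card_compl,
          Finset.card_insert_of_notMem (by simpa using hab), Finset.card_singleton]
      have hxS : x ∈ S := by
        rw [hSdef, Finset.mem_compl, Finset.mem_insert, Finset.mem_singleton]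
        push_neg
        exact ⟨hxa, hxb⟩
      have hyS : y ∈ S := by
        rw [hSdef, Finset.mem_compl, Finset.mem_insert, Finset.mem_singleton]
        push_neg
        exact ⟨hya, hyb⟩
      have h1 : mu G (n - 2) ≤ muLocal G ↑S := Nat.sInf_le ⟨S, hScard, rfl⟩
      have h3 : muLocal G ↑S ≤ 0 := by
        refine muLocal_le 0 (fun F hF => ?_)
        have : F = ∅ := by
          rw [Finset.eq_empty_iff_forall_notMem]
          intro T hT
          exact no_pendant_of_unreachable (Finset.mem_coe.2 hxS) (Finset.mem_coe.2 hyS)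
            hnr (hF.1 T hT)
        rw [this, Finset.card_empty]
      exact le_trans (le_trans h1 h3) (Nat.zero_le _)
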